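/- Let n ≥ 3 and suppose real numbers h_{ij} (1 ≤ i, j ≤ n, symmetric: h_{ij} = h_{ji}) satisfy h_{11} + h_{22} = h_{33} = ... = h_{nn} and h_{ij} = 0 for all i ≠ j. Then ∑_{1≤i<j≤n} (h_{ii} h_{jj} − h_{ij}²) − (h_{11}h_{22} − h_{12}²) = ((n−2)/(2(n−1))) (∑_{i=1}^n h_{ii})². -/

import Mathlib

open Finset

lemma half_sq_aux (f : ℕ → ℝ) (n : ℕ) :
    2 * ∑ i ∈ Finset.range n, ∑ j ∈ Finset.Ico (i + 1) n, f i * f j =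
      (∑ i ∈ Finset.range n, f i) ^ 2 - ∑ i ∈ Finset.range n, f i ^ 2 := by
  induction n with
  | zero => simp
  | succ n ih =>
    rw [Finset.sum_range_succ (f := fun i => ∑ j ∈ Finset.Ico (i + 1) (n + 1), f i * f j)]
    have h1 : ∀ i ∈ Finset.range n,
        ∑ j ∈ Finset.Ico (i + 1) (n + 1), f i * f j =
          (∑ j ∈ Finset.Ico (i + 1) n, f i * f j) + f i * f n := by
      intro i hi
      rw [Finset.sum_Ico_succ_top (Finset.mem_range.mp hi)]
    rw [Finset.sum_congr rfl h1, Finset.sum_add_distrib, Finset.sum_range_succ (f := f),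
      Finset.sum_range_succ (f := fun i => f i ^ 2)]
    simp only [Finset.Ico_self, Finset.sum_empty, add_zero, ← Finset.sum_mul]
    nlinarith [ih]

theorem chen_equality_converse (n : ℕ) (hn : 3 ≤ n) (h : ℕ → ℕ → ℝ)
    (hsymm : ∀ i j, h i j = h j i)
    (hdiag : ∀ i ∈ Finset.Ico 2 n, h 0 0 + h 1 1 = h i i)
    (hoff : ∀ i j, i ≠ j → h i j = 0) :
    (∑ i ∈ Finset.range n, ∑ j ∈ Finset.Ico (i + 1) n, (h i i * h j j - (h i j) ^ 2)) -
        (h 0 0 * h 1 1 - (h 0 1) ^ 2) =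
      ((n - 2 : ℝ) / (2 * (n - 1))) * (∑ i ∈ Finset.range n, h i i) ^ 2 := by
  set a := h 0 0
  set b := h 1 1
  -- off-diagonal entries vanish in the double sum
  have hzero : ∀ i ∈ Finset.range n, ∑ j ∈ Finset.Ico (i + 1) n, (h i i * h j j - (h i j) ^ 2)
      = ∑ j ∈ Finset.Ico (i + 1) n, h i i * h j j := by
    intro i _
    refine Finset.sum_congr rfl fun j hj => ?_
    have : i ≠ j := by have := (Finset.mem_Ico.mp hj).1; omega
    rw [hoff i j this]; ring
  rw [Finset.sum_congr rfl hzero, hoff 0 1 (by omega)]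
  -- sums of diagonal
  have hsplit : Finset.range n = Finset.Ico 0 n := by rw [Finset.range_eq_Ico]
  have h02 : (2:ℕ) ≤ n := by omega
  have hsum : ∑ i ∈ Finset.range n, h i i = ((n:ℝ) - 1) * (a + b) := by
    rw [hsplit, ← Finset.sum_Ico_consecutive _ (Nat.zero_le 2) h02]
    have : ∑ i ∈ Finset.Ico 2 n, h i i = ((n:ℝ) - 2) * (a + b) := by
      rw [Finset.sum_congr rfl (fun i hi => (hdiag i hi).symm), Finset.sum_const,
        Nat.card_Ico, nsmul_eq_mul, Nat.cast_sub h02]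
      push_cast; ring
    rw [this]
    norm_num [Finset.sum_Ico_eq_sum_range, Finset.sum_range_succ]
    ring
  have hsumsq : ∑ i ∈ Finset.range n, (h i i) ^ 2 = a ^ 2 + b ^ 2 + ((n:ℝ) - 2) * (a + b) ^ 2 := by
    rw [hsplit, ← Finset.sum_Ico_consecutive _ (Nat.zero_le 2) h02]
    have : ∑ i ∈ Finset.Ico 2 n, (h i i) ^ 2 = ((n:ℝ) - 2) * (a + b) ^ 2 := by
      rw [Finset.sum_congr rfl (fun i hi => by rw [← hdiag i hi]), Finset.sum_const,
        Nat.card_Ico, nsmul_eq_mul, Nat.cast_sub h02]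
      push_cast; ring
    rw [this]
    norm_num [Finset.sum_Ico_eq_sum_range, Finset.sum_range_succ]
    rfl
  have key := half_sq_aux (fun i => h i i) n
  have hn1 : ((n:ℝ) - 1) ≠ 0 := by
    have : (3:ℝ) ≤ (n:ℝ) := by exact_mod_cast hn
    linarith
  rw [hsum] at key ⊢
  rw [hsumsq] at key
  field_simp
  nlinarith [key]
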